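/- If f, g : I → ℝ are Hahn symmetric differentiable at t ∈ I^{q,ω} with t ≠ ω₀, then the product fg is Hahn symmetric differentiable at t and D̃_{q,ω}[fg](t) = D̃_{q,ω}[f](t)·g(σ(t)) + f(σ⁻¹(t))·D̃_{q,ω}[g](t), where σ(t) = qt + ω and σ⁻¹(t) = q⁻¹(t − ω). -/

import Mathlib

/-- Hahn symmetric difference operator for `t ≠ ω₀`:
`D̃_{q,ω}[f](t) = (f(qt+ω) − f(q⁻¹(t−ω)))/((q−q⁻¹)t + (1+q⁻¹)ω)`. -/
noncomputable def hahnSymD (q ω : ℝ) (f : ℝ → ℝ) (t : ℝ) : ℝ :=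
  (f (q * t + ω) - f (q⁻¹ * (t - ω))) / ((q - q⁻¹) * t + (1 + q⁻¹) * ω)

/-- Product rule for the Hahn symmetric derivative at `t ∈ I^{q,ω}`, `t ≠ ω₀`:
`D̃_{q,ω}[fg](t) = D̃_{q,ω}[f](t)·g(σ(t)) + f(σ⁻¹(t))·D̃_{q,ω}[g](t)`. -/
theorem stmt3 (q ω : ℝ) (hq : q ∈ Set.Ioo (0:ℝ) 1) (hω : 0 ≤ ω)
    (I : Set ℝ) (hω0 : ω / (1 - q) ∈ I)
    (f g : ℝ → ℝ) (t : ℝ) (htI : t ∈ (fun s => q * s + ω) '' I)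
    (ht : t ≠ ω / (1 - q)) :
    hahnSymD q ω (fun s => f s * g s) t
      = hahnSymD q ω f t * g (q * t + ω)
        + f (q⁻¹ * (t - ω)) * hahnSymD q ω g t := by
  unfold hahnSymD
  simp only [div_mul_eq_mul_div, ← mul_div_assoc, ← add_div]
  ring_nf
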